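/- In the m ≥ 3 elliptic m-fold point case with coordinates as in (†), the rational differential ω₀ = dt₁/t₁² + ⋯ + dt_{m−1}/t_{m−1}² − dt_m/t_m² on the normalization satisfies Σ_{i=1}^m Res_{p_i}((π*f)·ω₀) = 0 for every f in the local ring of C at p, i.e. ω₀ is a local generator of ω_C at the elliptic m-fold point. -/

import Mathlib

set_option synthInstance.maxHeartbeats 1000000
set_option maxHeartbeats 1000000

/-- The complete local ring of the elliptic `m`-fold point inside its
normalization `k[[t₁]] × ⋯ × k[[t_m]]`, in the standard coordinates (†):
for `m ≥ 3` it is generated by the functions `tᵢ ⊕ t_m` (`1 ≤ i ≤ m−1`) and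
all functions vanishing to order `≥ 2` on each branch. -/
noncomputable def ellipticSubalgebra (k : Type) [Field k] (m : ℕ) :
    Subalgebra k (Fin m → PowerSeries k) :=
  Algebra.adjoin k
    ({g : Fin m → PowerSeries k | ∃ i : Fin (m - 1),
        g = fun j : Fin m =>
          if (j : ℕ) = (i : ℕ) ∨ (j : ℕ) = m - 1 then PowerSeries.X else 0}
      ∪ {g : Fin m → PowerSeries k |
          ∀ j : Fin m, g j ∈ (Ideal.span {PowerSeries.X}) ^ 2})

/-- The rational differential
`ω₀ = dt₁/t₁² + ⋯ + dt_{m−1}/t_{m−1}² − dt_m/t_m²`, encoded as the tuple of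
Laurent series coefficients `g₀ᵢ = t_i^{-2}` for `i < m` and `−t_m^{-2}` on
the last branch. -/
noncomputable def omega0 (k : Type) [Field k] (m : ℕ) :
    Fin m → LaurentSeries k :=
  fun i => HahnSeries.single (-2 : ℤ) (if (i : ℕ) = m - 1 then (-1 : k) else 1)

namespace Stmt13Aux

variable {k : Type} [Field k]

/-- The sign `ε_j`: `-1` on the last branch, `1` elsewhere. -/
noncomputable def eps (k : Type) [Field k] (n : ℕ) (j : Fin (n + 1)) : k :=
  if (j : ℕ) = n then -1 else 1

lemma eps_sq (n : ℕ) (j : Fin (n + 1)) (x : k) : eps k n j * x * eps k n j = x := by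
  unfold eps
  split_ifs <;> ring

lemma coeff_zero_mul (f g : PowerSeries k) : (PowerSeries.coeff (R := k) 0) (f * g) =
    PowerSeries.coeff (R := k) 0 f * PowerSeries.coeff (R := k) 0 g := by
  simp [PowerSeries.coeff_zero_eq_constantCoeff, map_mul]

lemma coeff_one_mul (f g : PowerSeries k) : (PowerSeries.coeff (R := k) 1) (f * g) =
    PowerSeries.coeff (R := k) 0 f * PowerSeries.coeff (R := k) 1 g
      + PowerSeries.coeff (R := k) 1 f * PowerSeries.coeff (R := k) 0 g := by
  rw [PowerSeries.coeff_mul, show Finset.HasAntidiagonal.antidiagonal 1 = {(0, 1), (1, 0)} from rfl,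
    Finset.sum_pair (by decide)]

lemma single_mul_coeff (a d : ℤ) (c : k) (f : LaurentSeries k) :
    (HahnSeries.single a c * f).coeff d = c * f.coeff (d - a) := by
  have := HahnSeries.coeff_single_mul_add (Γ := ℤ) (R := k) (r := c) (x := f) (a := d - a) (b := a)
  simpa using this

lemma mul_single_coeff (b d : ℤ) (c : k) (f : LaurentSeries k) :
    (f * HahnSeries.single b c).coeff d = f.coeff (d - b) * c := by
  have := HahnSeries.coeff_mul_single_add (Γ := ℤ) (R := k) (r := c) (x := f) (a := d - b) (b := b)
  simpa using this

lemma ops_coeff_neg (f : PowerSeries k) (d : ℤ) (hd : d < 0) :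
    (HahnSeries.ofPowerSeries ℤ k f).coeff d = 0 := by
  rw [HahnSeries.ofPowerSeries_apply]
  apply HahnSeries.embDomain_notin_range
  rintro ⟨n, hn⟩
  simp at hn
  omega

lemma ops_coeff_nonneg (f : PowerSeries k) (d : ℤ) (hd : 0 ≤ d) :
    (HahnSeries.ofPowerSeries ℤ k f).coeff d = PowerSeries.coeff (R := k) d.toNat f := by
  lift d to ℕ using hd with e
  rw [Int.toNat_natCast, HahnSeries.ofPowerSeries_apply_coeff]

lemma ops_X_pow (e : ℕ) :
    HahnSeries.ofPowerSeries ℤ k (PowerSeries.X ^ e) = HahnSeries.single (e : ℤ) 1 := by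
  rw [map_pow, HahnSeries.ofPowerSeries_X, HahnSeries.single_pow]
  simp

lemma mem_sq_iff (f : PowerSeries k) :
    f ∈ (Ideal.span {(PowerSeries.X : PowerSeries k)}) ^ 2 ↔
      (∀ t : ℕ, t < 2 → PowerSeries.coeff (R := k) t f = 0) := by
  rw [Ideal.span_singleton_pow, Ideal.mem_span_singleton, PowerSeries.X_pow_dvd_iff]

lemma sum_ite_or {n : ℕ} (i : Fin (n + 1)) (hi : (i : ℕ) < n) (v : Fin (n + 1) → k) :
    (∑ j : Fin (n + 1), if (j : ℕ) = (i : ℕ) ∨ (j : ℕ) = n then v j else 0)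
      = v i + v (Fin.last n) := by
  rw [Fin.sum_univ_castSucc]
  have hlast : (if ((Fin.last n : Fin (n + 1)) : ℕ) = (i : ℕ) ∨ ((Fin.last n : Fin (n + 1)) : ℕ) = n
      then v (Fin.last n) else 0) = v (Fin.last n) := by
    rw [if_pos (Or.inr (Fin.val_last n))]
  rw [hlast]
  congr 1
  have hcongr : ∀ j : Fin n,
      (if ((Fin.castSucc j : Fin (n + 1)) : ℕ) = (i : ℕ) ∨ ((Fin.castSucc j : Fin (n + 1)) : ℕ) = n
        then v (Fin.castSucc j) else 0)
      = (if j = ⟨(i : ℕ), hi⟩ then v (Fin.castSucc j) else 0) := by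
    intro j
    apply if_congr _ rfl rfl
    constructor
    · rintro (h | h)
      · exact Fin.ext h
      · exact absurd h (Nat.ne_of_lt j.isLt)
    · rintro rfl
      exact Or.inl rfl
  rw [Finset.sum_congr rfl (fun j _ => hcongr j), Finset.sum_ite_eq' Finset.univ,
    if_pos (Finset.mem_univ _)]
  have hcs : Fin.castSucc (⟨(i : ℕ), hi⟩ : Fin n) = i := Fin.ext rfl
  rw [hcs]

lemma key_mem (n : ℕ) (r : Fin (n + 1) → PowerSeries k)
    (hr : r ∈ ellipticSubalgebra k (n + 1)) :
    (∀ j : Fin (n + 1),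
        PowerSeries.coeff (R := k) 0 (r j) = PowerSeries.coeff (R := k) 0 (r (Fin.last n))) ∧
      (∑ j : Fin (n + 1), eps k n j * PowerSeries.coeff (R := k) 1 (r j) = 0) := by
  induction hr using Algebra.adjoin_induction with
  | mem x hx =>
    simp only [Set.mem_union, Set.mem_setOf_eq] at hx
    rcases hx with ⟨i, rfl⟩ | hx
    · constructor
      · intro j
        simp only
        split_ifs <;> simp
      · have hi : (i : ℕ) < n := by have := i.isLt; omega
        set i' : Fin (n + 1) := ⟨(i : ℕ), by omega⟩ with hi'def
        have hi' : (i' : ℕ) < n := hi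
        have hterm : ∀ j : Fin (n + 1),
            eps k n j * PowerSeries.coeff (R := k) 1
              (if (j : ℕ) = (i : ℕ) ∨ (j : ℕ) = n + 1 - 1 then PowerSeries.X else 0)
            = (if (j : ℕ) = (i' : ℕ) ∨ (j : ℕ) = n then eps k n j else 0) := by
          intro j
          simp only [Nat.add_sub_cancel, hi'def]
          split_ifs <;> simp
        rw [Finset.sum_congr rfl (fun j _ => hterm j), sum_ite_or i' hi']
        have h1 : eps k n i' = 1 := by
          simp only [eps, hi'def, if_neg (Nat.ne_of_lt hi)]
        have h2 : eps k n (Fin.last n) = -1 := by simp [eps]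
        rw [h1, h2]
        ring
    · have h0 : ∀ j : Fin (n + 1), PowerSeries.coeff (R := k) 0 (x j) = 0 := fun j =>
        (mem_sq_iff (x j)).1 (hx j) 0 (by norm_num)
      have h1 : ∀ j : Fin (n + 1), PowerSeries.coeff (R := k) 1 (x j) = 0 := fun j =>
        (mem_sq_iff (x j)).1 (hx j) 1 (by norm_num)
      constructor
      · intro j
        rw [h0, h0]
      · simp [h1]
  | algebraMap c =>
    have hc : ∀ j : Fin (n + 1),
        (algebraMap k (Fin (n + 1) → PowerSeries k) c) j = PowerSeries.C (R := k) c := fun j => rfl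
    constructor
    · intro j
      rw [hc, hc]
    · have h1 : ∀ j : Fin (n + 1),
          eps k n j * PowerSeries.coeff (R := k) 1 ((algebraMap k (Fin (n + 1) → PowerSeries k) c) j)
            = 0 := by
        intro j
        rw [hc]
        simp [PowerSeries.coeff_C]
      rw [Finset.sum_congr rfl (fun j _ => h1 j), Finset.sum_const_zero]
  | add x y hx hy ihx ihy =>
    constructor
    · intro j
      simp only [Pi.add_apply, map_add, ihx.1 j, ihy.1 j]
    · simp only [Pi.add_apply, map_add, mul_add, Finset.sum_add_distrib, ihx.2, ihy.2, add_zero]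
  | mul x y hx hy ihx ihy =>
    constructor
    · intro j
      simp only [Pi.mul_apply, coeff_zero_mul, ihx.1 j, ihy.1 j]
    · have hterm : ∀ j : Fin (n + 1),
          eps k n j * PowerSeries.coeff (R := k) 1 ((x * y) j)
          = PowerSeries.coeff (R := k) 0 (x (Fin.last n)) * (eps k n j * PowerSeries.coeff (R := k) 1 (y j))
            + PowerSeries.coeff (R := k) 0 (y (Fin.last n)) * (eps k n j * PowerSeries.coeff (R := k) 1 (x j)) := by
        intro j
        rw [Pi.mul_apply, coeff_one_mul, ihx.1 j, ihy.1 j]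
        ring
      rw [Finset.sum_congr rfl (fun j _ => hterm j), Finset.sum_add_distrib,
        ← Finset.mul_sum, ← Finset.mul_sum, ihx.2, ihy.2]
      ring

end Stmt13Aux

open Stmt13Aux in
/-- For the elliptic `m`-fold point with `m ≥ 3`, the differential
`ω₀ = dt₁/t₁² + ⋯ + dt_{m−1}/t_{m−1}² − dt_m/t_m²` satisfies
`∑ᵢ Res_{p_i}((π^*f)·ω₀) = 0` for every `f` in the local ring of `C` at `p`,
i.e. `ω₀` is a local generator of `ω_C` at the elliptic `m`-fold point: every
rational differential satisfying the residue condition is an `R`-multiple of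
`ω₀`. -/
theorem stmt13 (k : Type) [Field k] [IsAlgClosed k] (m : ℕ) (hm : 3 ≤ m) :
    (∀ r ∈ ellipticSubalgebra k m,
      ∑ i : Fin m,
        ((HahnSeries.ofPowerSeries ℤ k (r i)) * omega0 k m i).coeff (-1) = 0)
    ∧ (∀ g : Fin m → LaurentSeries k,
        (∀ r ∈ ellipticSubalgebra k m,
          ∑ i : Fin m,
            ((HahnSeries.ofPowerSeries ℤ k (r i)) * g i).coeff (-1) = 0) →
        ∃ r ∈ ellipticSubalgebra k m,
          g = fun i : Fin m =>
            (HahnSeries.ofPowerSeries ℤ k (r i)) * omega0 k m i) := by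
  obtain ⟨n, rfl⟩ : ∃ n, m = n + 1 := ⟨m - 1, by omega⟩
  have homega : ∀ i : Fin (n + 1),
      omega0 k (n + 1) i = HahnSeries.single (-2 : ℤ) (eps k n i) := by
    intro i
    simp only [omega0, eps, Nat.add_sub_cancel]
  -- the residue of `(π^* f) ⋅ ω₀` on a single branch
  have hres1 : ∀ (f : PowerSeries k) (i : Fin (n + 1)),
      ((HahnSeries.ofPowerSeries ℤ k f) * omega0 k (n + 1) i).coeff (-1)
        = eps k n i * PowerSeries.coeff (R := k) 1 f := by
    intro f i
    rw [homega, mul_single_coeff]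
    have h1 : (-1 : ℤ) - (-2) = 1 := by norm_num
    rw [h1, ops_coeff_nonneg f 1 (by norm_num)]
    simp [mul_comm]
  constructor
  · -- part 1
    intro r hr
    obtain ⟨-, h1⟩ := key_mem n r hr
    calc ∑ i : Fin (n + 1),
          ((HahnSeries.ofPowerSeries ℤ k (r i)) * omega0 k (n + 1) i).coeff (-1)
        = ∑ i : Fin (n + 1), eps k n i * PowerSeries.coeff (R := k) 1 (r i) :=
          Finset.sum_congr rfl (fun i _ => hres1 (r i) i)
      _ = 0 := h1
  · -- part 2
    intro g hg
    -- vanishing in degrees ≤ -3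
    have hvan : ∀ (i : Fin (n + 1)) (d : ℤ), d ≤ -3 → (g i).coeff d = 0 := by
      intro i d hd
      set e : ℕ := (-1 - d).toNat with he
      have hee : (e : ℤ) = -1 - d := Int.toNat_of_nonneg (by omega)
      have he2 : 2 ≤ e := by omega
      set rr : Fin (n + 1) → PowerSeries k :=
        fun j => if j = i then PowerSeries.X ^ e else 0 with hrr
      have hmem : rr ∈ ellipticSubalgebra k (n + 1) := by
        apply Algebra.subset_adjoin
        right
        intro j
        simp only [hrr]
        split_ifs
        · rw [Ideal.span_singleton_pow, Ideal.mem_span_singleton]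
          exact pow_dvd_pow _ he2
        · exact zero_mem _
      have hsum := hg rr hmem
      have hterm : ∀ j : Fin (n + 1),
          ((HahnSeries.ofPowerSeries ℤ k (rr j)) * g j).coeff (-1)
            = if j = i then (g i).coeff d else 0 := by
        intro j
        by_cases hj : j = i
        · subst hj
          rw [if_pos rfl]
          simp only [hrr, if_pos rfl]
          rw [ops_X_pow, single_mul_coeff, one_mul]
          congr 1
          omega
        · rw [if_neg hj]
          simp only [hrr, if_neg hj, map_zero, zero_mul, HahnSeries.coeff_zero]
      rw [Finset.sum_congr rfl (fun j _ => hterm j), Finset.sum_ite_eq' Finset.univ,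
        if_pos (Finset.mem_univ _)] at hsum
      exact hsum
    -- the degree -2 relations
    have hm2 : ∀ i : Fin (n + 1), (i : ℕ) < n →
        (g i).coeff (-2) = -(g (Fin.last n)).coeff (-2) := by
      intro i hi
      set rr : Fin (n + 1) → PowerSeries k :=
        fun j => if (j : ℕ) = (i : ℕ) ∨ (j : ℕ) = n then PowerSeries.X else 0 with hrr
      have hmem : rr ∈ ellipticSubalgebra k (n + 1) := by
        apply Algebra.subset_adjoin
        left
        exact ⟨⟨(i : ℕ), by omega⟩, rfl⟩
      have hsum := hg rr hmem
      have hterm : ∀ j : Fin (n + 1),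
          ((HahnSeries.ofPowerSeries ℤ k (rr j)) * g j).coeff (-1)
            = if (j : ℕ) = (i : ℕ) ∨ (j : ℕ) = n then (g j).coeff (-2) else 0 := by
        intro j
        simp only [hrr]
        split_ifs
        · rw [HahnSeries.ofPowerSeries_X, single_mul_coeff, one_mul]
          norm_num
        · simp
      rw [Finset.sum_congr rfl (fun j _ => hterm j), sum_ite_or _ hi] at hsum
      linear_combination hsum
    -- the residue relation
    have hres : ∑ j : Fin (n + 1), (g j).coeff (-1) = 0 := by
      have hsum := hg 1 (one_mem _)
      have hterm : ∀ j : Fin (n + 1),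
          ((HahnSeries.ofPowerSeries ℤ k ((1 : Fin (n + 1) → PowerSeries k) j)) * g j).coeff (-1)
            = (g j).coeff (-1) := by
        intro j
        simp only [Pi.one_apply, map_one, one_mul]
      rwa [Finset.sum_congr rfl (fun j _ => hterm j)] at hsum
    -- the constant coefficient
    set c : k := -(g (Fin.last n)).coeff (-2) with hc
    -- the multiplier
    set r : Fin (n + 1) → PowerSeries k :=
      fun i => PowerSeries.mk (fun t => eps k n i * (g i).coeff ((t : ℤ) - 2)) with hrdef
    have hrc : ∀ (i : Fin (n + 1)) (t : ℕ),
        PowerSeries.coeff (R := k) t (r i) = eps k n i * (g i).coeff ((t : ℤ) - 2) := by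
      intro i t
      simp [hrdef, PowerSeries.coeff_mk]
    -- the generators
    set gen : Fin n → (Fin (n + 1) → PowerSeries k) :=
      fun i j => if (j : ℕ) = (i : ℕ) ∨ (j : ℕ) = n then PowerSeries.X else 0 with hgen
    set lam : Fin n → k := fun i => (g (Fin.castSucc i)).coeff (-1) with hlam
    set q : Fin (n + 1) → PowerSeries k :=
      r - (algebraMap k (Fin (n + 1) → PowerSeries k) c + ∑ i : Fin n, lam i • gen i) with hq
    have hsplit : r = (algebraMap k (Fin (n + 1) → PowerSeries k) c
        + ∑ i : Fin n, lam i • gen i) + q := by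
      rw [hq]; ring
    have heps_last : eps k n (Fin.last n) = -1 := by simp [eps]
    -- coefficients of q vanish in degrees 0 and 1
    have hq0 : ∀ j : Fin (n + 1), PowerSeries.coeff (R := k) 0 (q j) = 0 := by
      intro j
      have hgen0 : ∀ i : Fin n, PowerSeries.coeff (R := k) 0 (gen i j) = 0 := by
        intro i
        simp only [hgen]
        split_ifs <;> simp
      simp only [hq, Pi.sub_apply, Pi.add_apply, map_sub, map_add, Finset.sum_apply,
        map_sum, Pi.smul_apply, LinearMap.map_smul, hgen0, smul_eq_mul, mul_zero,
        Finset.sum_const_zero, add_zero, hrc]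
      have hC : PowerSeries.coeff (R := k) 0 ((algebraMap k (Fin (n + 1) → PowerSeries k) c) j) = c := by
        have : (algebraMap k (Fin (n + 1) → PowerSeries k) c) j = PowerSeries.C (R := k) c := rfl
        rw [this]; simp
      rw [hC]
      by_cases hj : (j : ℕ) = n
      · have hjl : j = Fin.last n := Fin.ext hj
        subst hjl
        rw [heps_last]
        simp only [Nat.cast_zero]
        norm_num [hc]
      · have : eps k n j = 1 := by simp only [eps, if_neg hj]
        rw [this, one_mul]
        have := hm2 j (by have := j.isLt; omega)
        simp only [Nat.cast_zero]
        norm_num [this, hc]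
    have hq1 : ∀ j : Fin (n + 1), PowerSeries.coeff (R := k) 1 (q j) = 0 := by
      intro j
      have hgen1 : ∀ i : Fin n, PowerSeries.coeff (R := k) 1 (gen i j)
          = if (j : ℕ) = (i : ℕ) ∨ (j : ℕ) = n then 1 else 0 := by
        intro i
        simp only [hgen]
        split_ifs <;> simp
      have hC : PowerSeries.coeff (R := k) 1 ((algebraMap k (Fin (n + 1) → PowerSeries k) c) j) = 0 := by
        have : (algebraMap k (Fin (n + 1) → PowerSeries k) c) j = PowerSeries.C (R := k) c := rfl
        rw [this]; simp [PowerSeries.coeff_C]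
      simp only [hq, Pi.sub_apply, Pi.add_apply, map_sub, map_add, Finset.sum_apply,
        map_sum, Pi.smul_apply, LinearMap.map_smul, hgen1, smul_eq_mul, hrc, hC, zero_add]
      have hmulite : ∀ i : Fin n,
          lam i * (if (j : ℕ) = (i : ℕ) ∨ (j : ℕ) = n then (1 : k) else 0)
            = if (j : ℕ) = (i : ℕ) ∨ (j : ℕ) = n then lam i else 0 := by
        intro i
        split_ifs <;> ring
      rw [Finset.sum_congr rfl (fun i _ => hmulite i)]
      simp only [Nat.cast_one]
      norm_num
      by_cases hj : (j : ℕ) = n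
      · have hsumlam : (∑ i : Fin n, if (j : ℕ) = (i : ℕ) ∨ (j : ℕ) = n then lam i else 0)
            = ∑ i : Fin n, lam i := by
          apply Finset.sum_congr rfl
          intro i _
          rw [if_pos (Or.inr hj)]
        rw [hsumlam]
        have hjl : j = Fin.last n := Fin.ext hj
        subst hjl
        rw [heps_last]
        have : ∑ i : Fin n, lam i = -(g (Fin.last n)).coeff (-1) := by
          have := hres
          rw [Fin.sum_univ_castSucc] at this
          simp only [hlam]
          linear_combination this
        rw [this]
        ring
      · have hjn : (j : ℕ) < n := by have := j.isLt; omega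
        have hsumlam : (∑ i : Fin n, if (j : ℕ) = (i : ℕ) ∨ (j : ℕ) = n then lam i else 0)
            = lam ⟨(j : ℕ), hjn⟩ := by
          have hcongr : ∀ i : Fin n,
              (if (j : ℕ) = (i : ℕ) ∨ (j : ℕ) = n then lam i else 0)
                = if i = ⟨(j : ℕ), hjn⟩ then lam i else 0 := by
            intro i
            apply if_congr _ rfl rfl
            constructor
            · rintro (h | h)
              · exact Fin.ext h.symm
              · exact absurd h hj
            · rintro rfl
              exact Or.inl rfl
          rw [Finset.sum_congr rfl (fun i _ => hcongr i), Finset.sum_ite_eq' Finset.univ,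
            if_pos (Finset.mem_univ _)]
        rw [hsumlam]
        have hcast : Fin.castSucc (⟨(j : ℕ), hjn⟩ : Fin n) = j := Fin.ext rfl
        have : eps k n j = 1 := by simp only [eps, if_neg hj]
        rw [this]
        simp only [hlam, hcast]
        ring
    -- membership of r
    have hrmem : r ∈ ellipticSubalgebra k (n + 1) := by
      rw [hsplit]
      apply add_mem
      · apply add_mem
        · exact Subalgebra.algebraMap_mem _ _
        · apply sum_mem
          intro i _
          apply Subalgebra.smul_mem
          apply Algebra.subset_adjoin
          left
          exact ⟨⟨(i : ℕ), by have := i.isLt; omega⟩, rfl⟩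
      · apply Algebra.subset_adjoin
        right
        intro j
        rw [mem_sq_iff]
        intro t ht
        interval_cases t
        · exact hq0 j
        · exact hq1 j
    refine ⟨r, hrmem, ?_⟩
    funext i
    ext d
    rw [homega, mul_single_coeff]
    have hsub : d - (-2) = d + 2 := by ring
    rw [hsub]
    by_cases hd : -2 ≤ d
    · rw [ops_coeff_nonneg _ _ (by omega), hrc]
      have : ((d + 2).toNat : ℤ) - 2 = d := by omega
      rw [this, eps_sq]
    · rw [ops_coeff_neg _ _ (by omega), zero_mul]
      exact hvan i d (by omega)
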